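/- Let a > 0, 0 < ζ ≤ 1, let b : (0,∞) → [0,∞) be measurable, and let w : (0,∞) × ℤ → ℂ satisfy |w(r,m)| ≤ b(r) e^{−a|m|^ζ} for a.e. r > 0 and all m ∈ ℤ. Let (F_j)_{j∈ℤ} be real-valued functions on (0,∞) with sup_{r>0} |F_j(r) − F_k(r)| ≤ (a/2)|j−k|^ζ for all j,k ∈ ℤ. Let (φ_j)_{j∈ℤ} be measurable functions (0,∞) → ℂ with Σ_{j∈ℤ} ∫₀^∞ b(r) |φ_j(r)|² r dr < ∞. Then Σ_{j∈ℤ} Σ_{k∈ℤ} |∫₀^∞ e^{F_j(r) − F_k(r)} \overline{φ_j(r)} w(r, j−k) φ_k(r) r dr| ≤ ξ(a,ζ) · Σ_{j∈ℤ} ∫₀^∞ b(r) |φ_j(r)|² r dr, where ξ(a,ζ) = Σ_{m∈ℤ} e^{−(a/2)|m|^ζ}. -/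

import Mathlib

open MeasureTheory

lemma aux_summable_g {c ζ : ℝ} (hc : 0 < c) (hζ : 0 < ζ) :
    Summable (fun m : ℤ => Real.exp (-c * |(m : ℝ)| ^ ζ)) := by
  have hnat : Summable (fun n : ℕ => Real.exp (-c * (n : ℝ) ^ ζ)) := by
    have h1 : Summable (fun n : ℕ => (n : ℝ) ^ (-2 : ℝ)) :=
      Real.summable_nat_rpow.mpr (by norm_num)
    refine summable_of_isBigO_nat h1 (Asymptotics.IsBigO.of_bound 1 ?_)
    have hlog : ∀ᶠ x : ℝ in Filter.atTop, ‖Real.log x‖ ≤ (c / 2) * ‖x ^ ζ‖ :=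
      (isLittleO_log_rpow_atTop hζ).bound (by positivity)
    have hev := (tendsto_natCast_atTop_atTop (R := ℝ)).eventually
      (hlog.and (Filter.eventually_ge_atTop (1 : ℝ)))
    filter_upwards [hev] with n hn
    obtain ⟨hlogn, h1n⟩ := hn
    have hnpos : (0 : ℝ) < n := lt_of_lt_of_le zero_lt_one h1n
    have hlogn' : Real.log n ≤ (c / 2) * (n : ℝ) ^ ζ := by
      have h2 : |Real.log n| ≤ (c / 2) * |(n : ℝ) ^ ζ| := hlogn
      rw [abs_of_nonneg (Real.log_nonneg h1n),
        abs_of_nonneg (Real.rpow_nonneg hnpos.le ζ)] at h2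
      exact h2
    have key : Real.exp (-c * (n : ℝ) ^ ζ) ≤ (n : ℝ) ^ (-2 : ℝ) := by
      have h3 : (n : ℝ) ^ (-2 : ℝ) = Real.exp (Real.log n * (-2)) :=
        Real.rpow_def_of_pos hnpos _
      rw [h3]
      apply Real.exp_le_exp.mpr
      nlinarith [Real.rpow_nonneg hnpos.le ζ]
    rw [one_mul, Real.norm_eq_abs, Real.norm_eq_abs, abs_of_nonneg (Real.exp_pos _).le,
      abs_of_nonneg (Real.rpow_nonneg hnpos.le _)]
    exact key
  refine Summable.of_nat_of_neg ?_ ?_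
  · simpa using hnat
  · refine hnat.congr fun n => ?_
    simp [abs_of_nonneg]

set_option maxHeartbeats 1000000 in
/-- Twisted Schur-type bound in angular Fourier modes: if `|w(r,m)| ≤ b(r) e^{−a|m|^ζ}`
for a.e. `r > 0` and all `m`, the weight family satisfies
`sup_{r>0} |F_j(r) − F_k(r)| ≤ (a/2)|j−k|^ζ`, and
`Σ_j ∫₀^∞ b(r)|φ_j(r)|² r dr < ∞`, then
`Σ_{j,k} |∫₀^∞ e^{F_j−F_k} \overline{φ_j} w(·, j−k) φ_k r dr| ≤ ξ(a,ζ) Σ_j ∫ b |φ_j|² r dr`,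
with `ξ(a,ζ) = Σ_{m∈ℤ} e^{−(a/2)|m|^ζ}`. -/
theorem twisted_perturbation_mode_bound (a ζ : ℝ) (ha : 0 < a) (hζ0 : 0 < ζ) (hζ1 : ζ ≤ 1)
    (b : ℝ → ℝ) (hb : Measurable b) (hbnn : ∀ r, 0 ≤ b r)
    (w : ℝ → ℤ → ℂ) (hwmeas : ∀ m : ℤ, Measurable (fun r => w r m))
    (hw : ∀ m : ℤ, ∀ᵐ r ∂(volume.restrict (Set.Ioi (0 : ℝ))),
      ‖w r m‖ ≤ b r * Real.exp (-a * |(m : ℝ)| ^ ζ))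
    (F : ℤ → ℝ → ℝ)
    (hF : ∀ j k : ℤ, ∀ r > (0 : ℝ), |F j r - F k r| ≤ (a / 2) * |((j - k : ℤ) : ℝ)| ^ ζ)
    (φ : ℤ → ℝ → ℂ) (hφmeas : ∀ j : ℤ, Measurable (φ j))
    (hφint : ∀ j : ℤ, IntegrableOn (fun r => b r * ‖φ j r‖ ^ 2 * r) (Set.Ioi 0))
    (hφsum : Summable (fun j : ℤ => ∫ r in Set.Ioi (0 : ℝ), b r * ‖φ j r‖ ^ 2 * r)) :
    (∑' j : ℤ, ∑' k : ℤ, ‖∫ r in Set.Ioi (0 : ℝ),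
        (Real.exp (F j r - F k r) : ℂ) * (starRingEnd ℂ) (φ j r) * w r (j - k)
          * φ k r * (r : ℂ)‖)
      ≤ (∑' m : ℤ, Real.exp (-(a / 2) * |(m : ℝ)| ^ ζ)) *
          ∑' j : ℤ, ∫ r in Set.Ioi (0 : ℝ), b r * ‖φ j r‖ ^ 2 * r := by
  set g : ℤ → ℝ := fun m => Real.exp (-(a / 2) * |(m : ℝ)| ^ ζ) with hgdef
  set I : ℤ → ℝ := fun j => ∫ r in Set.Ioi (0 : ℝ), b r * ‖φ j r‖ ^ 2 * r with hIdef
  have hg : Summable g := aux_summable_g (by linarith) hζ0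
  have hgnn : ∀ m, 0 ≤ g m := fun m => (Real.exp_pos _).le
  have hg1 : ∀ m, g m ≤ 1 := by
    intro m
    apply Real.exp_le_one_iff.mpr
    have : (0:ℝ) ≤ (a / 2) * |(m : ℝ)| ^ ζ := by positivity
    linarith
  have hInn : ∀ j, 0 ≤ I j := by
    intro j
    apply setIntegral_nonneg measurableSet_Ioi
    intro r hr
    have hrpos : (0:ℝ) < r := hr
    have := hbnn r
    positivity
  set T : ℤ → ℤ → ℝ := fun j k => ‖∫ r in Set.Ioi (0 : ℝ),
      (Real.exp (F j r - F k r) : ℂ) * (starRingEnd ℂ) (φ j r) * w r (j - k)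
        * φ k r * (r : ℂ)‖ with hTdef
  have hTnn : ∀ j k, 0 ≤ T j k := fun j k => norm_nonneg _
  -- pointwise bound
  have hT : ∀ j k, T j k ≤ g (j - k) * (I j / 2) + g (j - k) * (I k / 2) := by
    intro j k
    set f : ℝ → ℂ := fun r => (Real.exp (F j r - F k r) : ℂ) * (starRingEnd ℂ) (φ j r)
        * w r (j - k) * φ k r * (r : ℂ) with hfdef
    set D : ℝ → ℝ := fun r => g (j - k) *
        ((b r * ‖φ j r‖ ^ 2 * r + b r * ‖φ k r‖ ^ 2 * r) / 2) with hDdef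
    have hDint : IntegrableOn D (Set.Ioi 0) :=
      (((hφint j).add (hφint k)).div_const 2).const_mul _
    by_cases hint : IntegrableOn f (Set.Ioi 0)
    · have hbound : ∀ᵐ r ∂(volume.restrict (Set.Ioi (0 : ℝ))), ‖f r‖ ≤ D r := by
        filter_upwards [hw (j - k), ae_restrict_mem measurableSet_Ioi] with r hwr hr
        have hrpos : (0:ℝ) < r := hr
        have habs : ‖f r‖ = Real.exp (F j r - F k r) * ‖φ j r‖
            * ‖w r (j - k)‖ * ‖φ k r‖ * r := by
          simp only [hfdef, norm_mul, Complex.norm_real, Real.norm_eq_abs,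
            Complex.norm_conj]
          rw [abs_of_pos (Real.exp_pos _), abs_of_pos hrpos]
        rw [habs]
        set M : ℝ := |((j - k : ℤ) : ℝ)| ^ ζ with hMdef
        have hMnn : 0 ≤ M := Real.rpow_nonneg (abs_nonneg _) _
        have e1 : Real.exp (F j r - F k r) ≤ Real.exp ((a / 2) * M) :=
          Real.exp_le_exp.mpr (le_trans (le_abs_self _) (hF j k r hrpos))
        have e2 : ‖w r (j - k)‖ ≤ b r * Real.exp (-a * M) := hwr
        have step1 : Real.exp (F j r - F k r) * ‖φ j r‖ * ‖w r (j - k)‖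
            * ‖φ k r‖ * r ≤
            Real.exp ((a / 2) * M) * ‖φ j r‖ * (b r * Real.exp (-a * M)) * ‖φ k r‖ * r := by
          gcongr <;> first | exact hrpos.le | positivity
        have e3 : Real.exp ((a / 2) * M) * Real.exp (-a * M) = g (j - k) := by
          rw [← Real.exp_add]
          congr 1
          ring
        refine step1.trans ?_
        have key : b r * (‖φ j r‖ * ‖φ k r‖) * r ≤
            (b r * ‖φ j r‖ ^ 2 * r + b r * ‖φ k r‖ ^ 2 * r) / 2 := by
          nlinarith [mul_nonneg (mul_nonneg (hbnn r) hrpos.le)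
            (sq_nonneg (‖φ j r‖ - ‖φ k r‖))]
        calc Real.exp ((a / 2) * M) * ‖φ j r‖ * (b r * Real.exp (-a * M)) * ‖φ k r‖ * r
            = g (j - k) * (b r * (‖φ j r‖ * ‖φ k r‖) * r) := by rw [← e3]; ring
          _ ≤ D r := by
              rw [hDdef]
              exact mul_le_mul_of_nonneg_left key (hgnn _)
      have h1 : T j k = ‖∫ r in Set.Ioi (0:ℝ), f r‖ := rfl
      rw [h1]
      calc ‖∫ r in Set.Ioi (0:ℝ), f r‖ ≤ ∫ r in Set.Ioi (0:ℝ), ‖f r‖ :=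
            norm_integral_le_integral_norm f
        _ ≤ ∫ r in Set.Ioi (0:ℝ), D r := integral_mono_ae hint.norm hDint hbound
        _ = g (j - k) * (I j / 2) + g (j - k) * (I k / 2) := by
            rw [hDdef]
            simp only [integral_const_mul]
            rw [integral_div, integral_add (hφint j) (hφint k)]
            ring
    · rw [hTdef]
      simp only
      rw [integral_undef hint]
      simp only [norm_zero]
      have := hInn j; have := hInn k; have := hgnn (j - k)
      positivity
  -- summability of bounds
  have hgj : ∀ j : ℤ, Summable (fun k => g (j - k)) := by
    intro j
    exact (Equiv.subLeft j).summable_iff.mpr hg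
  have htsum_gj : ∀ j : ℤ, ∑' k, g (j - k) = ∑' m, g m := by
    intro j
    exact (Equiv.subLeft j).tsum_eq g
  have hs1 : ∀ j : ℤ, Summable (fun k => g (j - k) * (I j / 2)) :=
    fun j => (hgj j).mul_right _
  have hs2 : ∀ j : ℤ, Summable (fun k => g (j - k) * (I k / 2)) := by
    intro j
    refine Summable.of_nonneg_of_le
      (fun k => mul_nonneg (hgnn _) (div_nonneg (hInn k) (by norm_num))) (fun k => ?_)
      (hφsum.div_const 2)
    calc g (j - k) * (I k / 2) ≤ 1 * (I k / 2) :=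
          mul_le_mul_of_nonneg_right (hg1 _) (div_nonneg (hInn k) (by norm_num))
      _ = I k / 2 := one_mul _
  set ξ : ℝ := ∑' m, g m with hξdef
  have hξnn : 0 ≤ ξ := tsum_nonneg hgnn
  -- product summability for the convolution part
  have hP : Summable (fun p : ℤ × ℤ => g (p.1 - p.2) * (I p.2 / 2)) := by
    have hprod : Summable (fun p : ℤ × ℤ => g p.1 * (I p.2 / 2)) :=
      hg.mul_of_nonneg (hφsum.div_const 2) hgnn (fun k => by have := hInn k; positivity)
    set e : ℤ × ℤ ≃ ℤ × ℤ :=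
      { toFun := fun p => (p.1 + p.2, p.2)
        invFun := fun p => (p.1 - p.2, p.2)
        left_inv := fun p => by simp
        right_inv := fun p => by simp } with hedef
    have : Summable (fun p : ℤ × ℤ => (fun q : ℤ × ℤ => g (q.1 - q.2) * (I q.2 / 2)) (e p)) := by
      refine hprod.congr fun p => ?_
      simp [hedef]
    exact e.summable_iff.mp this
  have hC : Summable (fun j : ℤ => ∑' k, g (j - k) * (I k / 2)) := by
    have := hP.prod
    exact this
  have htsumC : ∑' j : ℤ, ∑' k, g (j - k) * (I k / 2) = ξ * ((∑' j, I j) / 2) := by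
    rw [← Summable.tsum_prod hP]
    set e : ℤ × ℤ ≃ ℤ × ℤ :=
      { toFun := fun p => (p.1 + p.2, p.2)
        invFun := fun p => (p.1 - p.2, p.2)
        left_inv := fun p => by simp
        right_inv := fun p => by simp } with hedef
    rw [← e.tsum_eq (fun p : ℤ × ℤ => g (p.1 - p.2) * (I p.2 / 2))]
    have heq : ∀ p : ℤ × ℤ, (fun q : ℤ × ℤ => g (q.1 - q.2) * (I q.2 / 2)) (e p)
        = g p.1 * (I p.2 / 2) := by
      intro p; simp [hedef]
    rw [tsum_congr heq]
    have hprod : Summable (fun p : ℤ × ℤ => g p.1 * (I p.2 / 2)) :=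
      hg.mul_of_nonneg (hφsum.div_const 2) hgnn (fun k => by have := hInn k; positivity)
    rw [Summable.tsum_prod hprod]
    simp_rw [tsum_mul_left]
    rw [tsum_mul_right, ← hξdef]
    congr 1
    rw [← tsum_div_const]
  -- inner bound
  have hB : ∀ j : ℤ, Summable (fun k => g (j - k) * (I j / 2) + g (j - k) * (I k / 2)) :=
    fun j => (hs1 j).add (hs2 j)
  have hTsummable : ∀ j : ℤ, Summable (fun k => T j k) := by
    intro j
    exact Summable.of_nonneg_of_le (fun k => hTnn j k) (fun k => hT j k) (hB j)
  have h_inner : ∀ j : ℤ, ∑' k, T j k ≤ ξ * (I j / 2) + ∑' k, g (j - k) * (I k / 2) := by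
    intro j
    calc ∑' k, T j k ≤ ∑' k, (g (j - k) * (I j / 2) + g (j - k) * (I k / 2)) :=
          Summable.tsum_le_tsum (hT j) (hTsummable j) (hB j)
      _ = (∑' k, g (j - k) * (I j / 2)) + ∑' k, g (j - k) * (I k / 2) :=
          Summable.tsum_add (hs1 j) (hs2 j)
      _ = ξ * (I j / 2) + ∑' k, g (j - k) * (I k / 2) := by
          rw [tsum_mul_right, htsum_gj j]
  -- outer bound
  have hRsum : Summable (fun j : ℤ => ξ * (I j / 2) + ∑' k, g (j - k) * (I k / 2)) :=
    (((hφsum.div_const 2).mul_left ξ)).add hC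
  have hTsum_outer : Summable (fun j : ℤ => ∑' k, T j k) := by
    refine Summable.of_nonneg_of_le (fun j => tsum_nonneg (fun k => hTnn j k))
      (fun j => h_inner j) hRsum
  calc ∑' j : ℤ, ∑' k, T j k
      ≤ ∑' j : ℤ, (ξ * (I j / 2) + ∑' k, g (j - k) * (I k / 2)) :=
        Summable.tsum_le_tsum h_inner hTsum_outer hRsum
    _ = ξ * ((∑' j, I j) / 2) + ξ * ((∑' j, I j) / 2) := by
        rw [Summable.tsum_add ((hφsum.div_const 2).mul_left ξ) hC, htsumC]
        congr 1
        rw [tsum_mul_left]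
        congr 1
        rw [← tsum_div_const]
    _ = ξ * ∑' j, I j := by ring
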